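/- arXiv:2201.00473 — 3 statements merged into one kernel-verified Lean document; each statement's English description precedes it below -/
import Mathlib

section
/- For a positive odd integer n and any integer k, define the Gauss-type sum G_k(n) = ((1-i)/2 + (-1/n)(1+i)/2) · Σ_{a mod n} (a/n) e(ak/n), where (·/n) is the Jacobi symbol and e(x) = exp(2πix). Then G_k is multiplicative in n: for coprime odd positive integers m and n, G_k(mn) = G_k(m)·G_k(n). -/
open Complex Finset

/-- The Gauss-type sum `G_k(n)` for odd `n`. -/
noncomputable def gaussG (k : ℤ) (n : ℕ) : ℂ :=
  ((1 - Complex.I) / 2 + (jacobiSym (-1) n : ℂ) * (1 + Complex.I) / 2) *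
    ∑ a ∈ Finset.range n, (jacobiSym (a : ℤ) n : ℂ) *
      Complex.exp (2 * Real.pi * Complex.I * ((a : ℂ) * (k : ℂ) / (n : ℂ)))

private lemma sum_range_eq_sum_zmod {n : ℕ} [NeZero n] (f : ℕ → ℂ) :
    ∑ a ∈ Finset.range n, f a = ∑ a : ZMod n, f a.val := by
  refine Finset.sum_nbij' (fun a => (a : ZMod n)) (fun a => a.val)
    (fun a _ => Finset.mem_univ _) (fun a _ => Finset.mem_range.mpr (ZMod.val_lt a))
    (fun a ha => ZMod.val_cast_of_lt (Finset.mem_range.mp ha))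
    (fun a _ => ZMod.natCast_rightInverse a) (fun a ha => ?_)
  rw [ZMod.val_cast_of_lt (Finset.mem_range.mp ha)]

private lemma exp_congr {N : ℕ} (hN : N ≠ 0) (k : ℤ) {a b : ℕ} (h : a % N = b % N) :
    Complex.exp (2 * Real.pi * Complex.I * ((a : ℂ) * (k : ℂ) / (N : ℂ))) =
      Complex.exp (2 * Real.pi * Complex.I * ((b : ℂ) * (k : ℂ) / (N : ℂ))) := by
  obtain ⟨t, ht⟩ : ∃ t : ℤ, (a : ℤ) = (b : ℤ) + N * t := by
    refine ⟨(a : ℤ) / N - (b : ℤ) / N, ?_⟩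
    have ha := Int.mul_ediv_add_emod (a : ℤ) N
    have hb := Int.mul_ediv_add_emod (b : ℤ) N
    have h' : (a : ℤ) % N = (b : ℤ) % N := by
      have := congrArg (Nat.cast : ℕ → ℤ) h
      push_cast at this
      exact this
    linear_combination h' - ha + hb
  have hN' : (N : ℂ) ≠ 0 := Nat.cast_ne_zero.mpr hN
  have key : (a : ℂ) * (k : ℂ) / (N : ℂ) =
      (b : ℂ) * (k : ℂ) / (N : ℂ) + ((t * k : ℤ) : ℂ) := by
    have : (a : ℂ) = (b : ℂ) + (N : ℂ) * (t : ℂ) := by exact_mod_cast congrArg (Int.cast : ℤ → ℂ) ht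
    field_simp [this]
    rw [this]; push_cast; ring
  rw [key, mul_add, Complex.exp_add]
  have : Complex.exp (2 * Real.pi * Complex.I * ((t * k : ℤ) : ℂ)) = 1 := by
    rw [show (2 : ℂ) * Real.pi * Complex.I * ((t * k : ℤ) : ℂ)
        = ((t * k : ℤ) : ℂ) * (2 * Real.pi * Complex.I) by ring]
    exact Complex.exp_int_mul_two_pi_mul_I (t * k)
  rw [this, mul_one]

theorem gaussG_multiplicative (k : ℤ) (m n : ℕ) (hm : 0 < m) (hn : 0 < n)
    (hmodd : Odd m) (hnodd : Odd n) (hmn : Nat.Coprime m n) :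
    gaussG k (m * n) = gaussG k m * gaussG k n := by
  haveI : NeZero m := ⟨hm.ne'⟩
  haveI : NeZero n := ⟨hn.ne'⟩
  haveI : NeZero (m * n) := ⟨Nat.mul_ne_zero hm.ne' hn.ne'⟩
  -- the bijection ZMod m × ZMod n → ZMod (m*n)
  set ψ : ZMod m × ZMod n → ZMod (m * n) :=
    fun p => ((p.1.val * n + p.2.val * m : ℕ) : ZMod (m * n)) with hψ
  have hinj : Function.Injective ψ := by
    intro p q h
    have key : ∀ (M N : ℕ) [NeZero M] [NeZero N], Nat.Coprime N M →
        ∀ (x y : ZMod M) (u v : ZMod N),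
        ((x.val * N + u.val * M : ℕ) : ZMod (M * N)) =
        ((y.val * N + v.val * M : ℕ) : ZMod (M * N)) → x = y := by
      intro M N _ _ hc x y u v hxy
      have h2 := congrArg (ZMod.castHom (dvd_mul_right M N) (ZMod M)) hxy
      simp only [map_natCast] at h2
      push_cast at h2
      simp only [ZMod.natCast_val, ZMod.cast_id, ZMod.natCast_self, mul_zero, add_zero] at h2
      have hu : IsUnit ((N : ℕ) : ZMod M) := (ZMod.isUnit_iff_coprime N M).mpr hc
      exact hu.mul_right_cancel h2
    have h1 : p.1 = q.1 := key m n hmn.symm p.1 q.1 p.2 q.2 h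
    have h2 : p.2 = q.2 := by
      refine key n m hmn p.2 q.2 p.1 q.1 ?_
      have e1 : (p.2.val * m + p.1.val * n : ℕ) = (p.1.val * n + p.2.val * m : ℕ) := by ring
      have e2 : (q.2.val * m + q.1.val * n : ℕ) = (q.1.val * n + q.2.val * m : ℕ) := by ring
      rw [show n * m = m * n from Nat.mul_comm n m, e1, e2]
      exact h
    exact Prod.ext h1 h2
  have hbij : Function.Bijective ψ := by
    rw [Fintype.bijective_iff_injective_and_card]
    refine ⟨hinj, ?_⟩
    simp [ZMod.card]
  -- sums
  set f : ℕ → ℕ → ℂ := fun N a => (jacobiSym (a : ℤ) N : ℂ) *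
      Complex.exp (2 * Real.pi * Complex.I * ((a : ℂ) * (k : ℂ) / (N : ℂ))) with hf
  have key : ∀ p : ZMod m × ZMod n, f (m * n) (ψ p).val =
      ((jacobiSym (n : ℤ) m : ℂ) * (jacobiSym (m : ℤ) n : ℂ)) *
        (f m p.1.val * f n p.2.val) := by
    rintro ⟨b, c⟩
    have hval : (ψ (b, c)).val = (b.val * n + c.val * m) % (m * n) := ZMod.val_natCast _ _
    set w : ℕ := b.val * n + c.val * m with hw
    have hmod : (ψ (b, c)).val % (m * n) = w % (m * n) := by
      rw [hval]; exact Nat.mod_mod_of_dvd _ dvd_rfl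
    -- Jacobi symbol part
    have hJ : jacobiSym ((ψ (b, c)).val : ℤ) (m * n) =
        (jacobiSym (n : ℤ) m * jacobiSym (m : ℤ) n) *
          (jacobiSym (b.val : ℤ) m * jacobiSym (c.val : ℤ) n) := by
      have h1 : jacobiSym ((ψ (b, c)).val : ℤ) (m * n) = jacobiSym (w : ℤ) (m * n) := by
        apply jacobiSym.mod_left'
        exact_mod_cast congrArg (Nat.cast : ℕ → ℤ) hmod
      rw [h1, jacobiSym.mul_right]
      have h2 : jacobiSym (w : ℤ) m = jacobiSym (b.val : ℤ) m * jacobiSym (n : ℤ) m := by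
        rw [← jacobiSym.mul_left]
        apply jacobiSym.mod_left'
        rw [hw]
        push_cast
        rw [Int.add_mul_emod_self_right]
      have h3 : jacobiSym (w : ℤ) n = jacobiSym (c.val : ℤ) n * jacobiSym (m : ℤ) n := by
        rw [← jacobiSym.mul_left]
        apply jacobiSym.mod_left'
        rw [hw]
        push_cast
        rw [add_comm ((b.val : ℤ) * n), Int.add_mul_emod_self_right]
      rw [h2, h3]; ring
    -- exponential part
    have hE : Complex.exp (2 * Real.pi * Complex.I *
          (((ψ (b, c)).val : ℂ) * (k : ℂ) / ((m * n : ℕ) : ℂ))) =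
        Complex.exp (2 * Real.pi * Complex.I * ((b.val : ℂ) * (k : ℂ) / (m : ℂ))) *
          Complex.exp (2 * Real.pi * Complex.I * ((c.val : ℂ) * (k : ℂ) / (n : ℂ))) := by
      rw [exp_congr (Nat.mul_ne_zero hm.ne' hn.ne') k hmod]
      rw [← Complex.exp_add, ← mul_add]
      have hm' : (m : ℂ) ≠ 0 := Nat.cast_ne_zero.mpr hm.ne'
      have hn' : (n : ℂ) ≠ 0 := Nat.cast_ne_zero.mpr hn.ne'
      congr 1
      congr 1
      rw [hw]
      push_cast
      field_simp
    rw [hf]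
    simp only
    rw [hJ]
    rw [show ((m * n : ℕ) : ℂ) = ((m : ℕ) * (n : ℕ) : ℕ) by norm_cast] at hE ⊢
    rw [hE]
    push_cast
    ring
  have hsum : ∑ a ∈ Finset.range (m * n), f (m * n) a =
      ((jacobiSym (n : ℤ) m : ℂ) * (jacobiSym (m : ℤ) n : ℂ)) *
        ((∑ a ∈ Finset.range m, f m a) * (∑ a ∈ Finset.range n, f n a)) := by
    rw [sum_range_eq_sum_zmod, sum_range_eq_sum_zmod, sum_range_eq_sum_zmod]
    rw [← Fintype.sum_bijective ψ hbij (fun p => f (m * n) (ψ p).val) _ (fun p => rfl)]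
    rw [Fintype.sum_congr _ _ key, ← Finset.mul_sum, Fintype.sum_prod_type,
      Finset.sum_mul_sum]
  -- epsilon factor identity
  set ε : ℕ → ℂ := fun N => (1 - Complex.I) / 2 + (jacobiSym (-1) N : ℂ) * (1 + Complex.I) / 2
    with hε
  have hεmul : ε (m * n) * ((jacobiSym (n : ℤ) m : ℂ) * (jacobiSym (m : ℤ) n : ℂ)) =
      ε m * ε n := by
    have hJm : jacobiSym (-1) m = (-1 : ℤ) ^ (m / 2) := by
      rw [jacobiSym.at_neg_one hmodd, ZMod.χ₄_eq_neg_one_pow (Nat.odd_iff.mp hmodd)]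
    have hJn : jacobiSym (-1) n = (-1 : ℤ) ^ (n / 2) := by
      rw [jacobiSym.at_neg_one hnodd, ZMod.χ₄_eq_neg_one_pow (Nat.odd_iff.mp hnodd)]
    have hJmn : jacobiSym (-1) (m * n) = jacobiSym (-1) m * jacobiSym (-1) n :=
      jacobiSym.mul_right _ _ _
    have hQR : jacobiSym (m : ℤ) n * jacobiSym (n : ℤ) m = (-1 : ℤ) ^ (m / 2 * (n / 2)) := by
      rw [jacobiSym.quadratic_reciprocity hmodd hnodd, mul_assoc, ← sq,
        jacobiSym.sq_one (by rw [Int.gcd_natCast_natCast]; exact hmn.symm), mul_one]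
    have key2 : ε (m * n) * ((jacobiSym (m : ℤ) n * jacobiSym (n : ℤ) m : ℤ) : ℂ) = ε m * ε n := by
      rw [hε]
      simp only
      rw [hJmn, hJm, hJn, hQR]
      rcases Nat.even_or_odd (m / 2) with hme | hmo <;>
        rcases Nat.even_or_odd (n / 2) with hne | hno
      · rw [hme.neg_one_pow, hne.neg_one_pow, (hme.mul_right _).neg_one_pow]
        push_cast; ring
      · rw [hme.neg_one_pow, hno.neg_one_pow, (hme.mul_right _).neg_one_pow]
        push_cast; ring
      · rw [hmo.neg_one_pow, hne.neg_one_pow, (hne.mul_left _).neg_one_pow]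
        push_cast; ring
      · rw [hmo.neg_one_pow, hno.neg_one_pow, (hmo.mul hno).neg_one_pow]
        push_cast
        linear_combination (-1 : ℂ) * Complex.I_sq
    calc ε (m * n) * ((jacobiSym (n : ℤ) m : ℂ) * (jacobiSym (m : ℤ) n : ℂ))
        = ε (m * n) * ((jacobiSym (m : ℤ) n * jacobiSym (n : ℤ) m : ℤ) : ℂ) := by push_cast; ring
      _ = ε m * ε n := key2
  -- conclude
  show ε (m * n) * ∑ a ∈ Finset.range (m * n), f (m * n) a =
      (ε m * ∑ a ∈ Finset.range m, f m a) * (ε n * ∑ a ∈ Finset.range n, f n a)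
  rw [hsum, ← mul_assoc, hεmul]
  ring
end

section
/- Let α, β, γ be nonzero complex numbers with αβγ = 1, and define A(p^h,1) = Σ_{a+b+c=h, a,b,c ≥ 0} α^a β^b γ^c for h ≥ 0 (Schur polynomial at (α,β,γ)), and A(1,p) = αβ + αγ + βγ. Then for every h ≥ 0, A(p^{2h},1) = Σ_{a+b+c=h} α^{2a} β^{2b} γ^{2c} + A(1,p) · Σ_{a+b+c=h-1} α^{2a} β^{2b} γ^{2c}, where the second sum is 0 when h = 0. -/
open Finset

/-- Complete homogeneous symmetric polynomial in three complex variables: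
`hpoly h x y z = Σ_{a+b+c=h} x^a y^b z^c`. -/
noncomputable def hpoly (h : ℕ) (x y z : ℂ) : ℂ :=
  ∑ t ∈ Finset.Nat.antidiagonalTuple 3 h, x ^ (t 0) * y ^ (t 1) * z ^ (t 2)

/-- Two-variable complete homogeneous sym poly of degree `m-1` (0 if `m = 0`). -/
noncomputable def Spoly (m : ℕ) (y z : ℂ) : ℂ :=
  ∑ j ∈ Finset.range m, y ^ j * z ^ (m - 1 - j)

/-- Three-variable version: `Tpoly n x y z = Σ_{i<n} x^i * Spoly (n-i) y z`. -/
noncomputable def Tpoly (n : ℕ) (x y z : ℂ) : ℂ :=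
  ∑ i ∈ Finset.range n, x ^ i * Spoly (n - i) y z

lemma Spoly_succ (m : ℕ) (y z : ℂ) :
    Spoly (m + 1) y z = z * Spoly m y z + y ^ m := by
  unfold Spoly
  rw [Finset.sum_range_succ, Finset.mul_sum]
  congr 1
  · refine Finset.sum_congr rfl fun j hj => ?_
    rw [Finset.mem_range] at hj
    have : m + 1 - 1 - j = (m - 1 - j) + 1 := by omega
    rw [this, pow_succ]
    ring
  · simp

lemma Spoly_even (m : ℕ) (y z : ℂ) :
    Spoly (2 * m + 1) y z = Spoly (m + 1) (y ^ 2) (z ^ 2) + y * z * Spoly m (y ^ 2) (z ^ 2) := by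
  induction m with
  | zero => simp [Spoly]
  | succ k ih =>
    have h1 : 2 * (k + 1) + 1 = (2 * k + 1) + 1 + 1 := by ring
    rw [h1, Spoly_succ, Spoly_succ, ih, Spoly_succ (k + 1) (y ^ 2) (z ^ 2),
      Spoly_succ k (y ^ 2) (z ^ 2)]
    ring

lemma Spoly_odd (m : ℕ) (y z : ℂ) :
    Spoly (2 * m + 2) y z = (y + z) * Spoly (m + 1) (y ^ 2) (z ^ 2) := by
  induction m with
  | zero =>
    simp [Spoly, Finset.sum_range_succ]
    ring
  | succ k ih =>
    have h1 : 2 * (k + 1) + 2 = (2 * k + 2) + 1 + 1 := by ring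
    rw [h1, Spoly_succ, Spoly_succ, ih, Spoly_succ (k + 1) (y ^ 2) (z ^ 2)]
    ring

lemma Tpoly_succ (n : ℕ) (x y z : ℂ) :
    Tpoly (n + 1) x y z = Spoly (n + 1) y z + x * Tpoly n x y z := by
  unfold Tpoly
  simp only [Finset.mul_sum]
  rw [Finset.sum_range_succ', add_comm]
  congr 1
  · simp
  · refine Finset.sum_congr rfl fun i hi => ?_
    rw [Nat.succ_sub_succ, pow_succ]
    ring

lemma Tpoly_main (k : ℕ) (x y z : ℂ) :
    Tpoly (2 * k + 1) x y z =
      Tpoly (k + 1) (x ^ 2) (y ^ 2) (z ^ 2) +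
        (x * y + x * z + y * z) * Tpoly k (x ^ 2) (y ^ 2) (z ^ 2) := by
  induction k with
  | zero => simp [Tpoly, Spoly]
  | succ k ih =>
    have h1 : 2 * (k + 1) + 1 = (2 * k + 1 + 1) + 1 := by ring
    rw [h1, Tpoly_succ, Tpoly_succ, ih]
    have h2 : 2 * k + 1 + 1 + 1 = 2 * (k + 1) + 1 := by ring
    have h3 : 2 * k + 1 + 1 = 2 * k + 2 := rfl
    rw [h2, h3, Spoly_even (k + 1), Spoly_odd k, Tpoly_succ (k + 1), Tpoly_succ k]
    ring

lemma hpoly_eq_Tpoly (h : ℕ) (x y z : ℂ) : hpoly h x y z = Tpoly (h + 1) x y z := by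
  unfold hpoly Tpoly
  have step1 :
      ∑ t ∈ Finset.Nat.antidiagonalTuple 3 h, x ^ (t 0) * y ^ (t 1) * z ^ (t 2) =
        ∑ σ ∈ (Finset.HasAntidiagonal.antidiagonal h).sigma (fun p => Finset.HasAntidiagonal.antidiagonal p.2),
          x ^ σ.1.1 * y ^ σ.2.1 * z ^ σ.2.2 := by
    refine Finset.sum_nbij' (i := fun t => ⟨(t 0, t 1 + t 2), (t 1, t 2)⟩)
      (j := fun σ => ![σ.1.1, σ.2.1, σ.2.2]) ?_ ?_ ?_ ?_ ?_
    · intro t ht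
      rw [Finset.Nat.mem_antidiagonalTuple] at ht
      rw [Fin.sum_univ_three] at ht
      simp [Finset.mem_sigma, Finset.mem_antidiagonal]
      omega
    · intro σ hσ
      rw [Finset.mem_sigma, Finset.HasAntidiagonal.mem_antidiagonal, Finset.HasAntidiagonal.mem_antidiagonal] at hσ
      rw [Finset.Nat.mem_antidiagonalTuple, Fin.sum_univ_three]
      simp
      omega
    · intro t ht
      funext i
      fin_cases i <;> simp
    · intro σ hσ
      rw [Finset.mem_sigma, Finset.HasAntidiagonal.mem_antidiagonal, Finset.HasAntidiagonal.mem_antidiagonal] at hσ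
      obtain ⟨⟨a, b⟩, c, d⟩ := σ
      simp only at hσ
      have hb : c + d = b := hσ.2
      subst hb
      rfl
    · intro t ht
      simp
  rw [step1, Finset.sum_sigma]
  rw [Finset.Nat.sum_antidiagonal_eq_sum_range_succ_mk]
  refine Finset.sum_congr rfl fun i hi => ?_
  rw [Finset.mem_range] at hi
  rw [Finset.Nat.sum_antidiagonal_eq_sum_range_succ_mk]
  have : h + 1 - i = (h - i) + 1 := by omega
  rw [this]
  unfold Spoly
  rw [Finset.mul_sum]
  refine Finset.sum_congr rfl fun j hj => ?_
  have : h - i + 1 - 1 - j = h - i - j := by omega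
  rw [this]
  ring

theorem hecke_even_decomposition (α β γ : ℂ) (hα : α ≠ 0) (hβ : β ≠ 0) (hγ : γ ≠ 0)
    (habc : α * β * γ = 1) (h : ℕ) :
    hpoly (2 * h) α β γ =
      hpoly h (α ^ 2) (β ^ 2) (γ ^ 2) +
        (α * β + α * γ + β * γ) *
          (if h = 0 then 0 else hpoly (h - 1) (α ^ 2) (β ^ 2) (γ ^ 2)) := by
  rw [hpoly_eq_Tpoly, hpoly_eq_Tpoly, Tpoly_main]
  rcases Nat.eq_zero_or_pos h with rfl | hh
  · simp [Tpoly]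
  · rw [if_neg (by omega), hpoly_eq_Tpoly]
    have : h - 1 + 1 = h := by omega
    rw [this]
end

section
/- Let p ≥ 17 be a prime, and let z, z' ∈ ℂ with |z| ≤ 3p^{5/14} and |z'| ≤ 3p^{5/14}. If p²z + pz·conj(z') + conj(z') = p²z' + pz'·conj(z) + conj(z), then z = z'. -/
open Complex

theorem determination_key_step (p : ℕ) (hp : p.Prime) (hp17 : 17 ≤ p) (z z' : ℂ)
    (hz : ‖z‖ ≤ 3 * (p : ℝ) ^ ((5 : ℝ) / 14))
    (hz' : ‖z'‖ ≤ 3 * (p : ℝ) ^ ((5 : ℝ) / 14))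
    (heq : (p : ℂ) ^ 2 * z + (p : ℂ) * z * (starRingEnd ℂ) z' + (starRingEnd ℂ) z' =
      (p : ℂ) ^ 2 * z' + (p : ℂ) * z' * (starRingEnd ℂ) z + (starRingEnd ℂ) z) :
    z = z' := by
  have hpR : (17 : ℝ) ≤ (p : ℝ) := by exact_mod_cast hp17
  have hpR0 : (0 : ℝ) ≤ (p : ℝ) := by linarith
  -- bound: 6 * p^(19/14) ≤ p^2, i.e. 6 ≤ p^(9/14)
  have h6 : (6 : ℝ) ≤ (p : ℝ) ^ ((9 : ℝ) / 14) := by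
    have hx0 : (0 : ℝ) ≤ (p : ℝ) ^ ((9 : ℝ) / 14) := Real.rpow_nonneg hpR0 _
    have hpow : ((p : ℝ) ^ ((9 : ℝ) / 14)) ^ (14 : ℕ) = (p : ℝ) ^ (9 : ℕ) := by
      rw [← Real.rpow_natCast ((p : ℝ) ^ ((9 : ℝ) / 14)) 14, ← Real.rpow_mul hpR0,
        ← Real.rpow_natCast (p : ℝ) 9]
      norm_num
    have h14 : (6 : ℝ) ^ (14 : ℕ) ≤ ((p : ℝ) ^ ((9 : ℝ) / 14)) ^ (14 : ℕ) := by
      rw [hpow]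
      calc (6 : ℝ) ^ (14 : ℕ) ≤ (17 : ℝ) ^ (9 : ℕ) := by norm_num
        _ ≤ (p : ℝ) ^ (9 : ℕ) := by
            exact pow_le_pow_left₀ (by norm_num) hpR 9
    exact le_of_pow_le_pow_left₀ (by norm_num) hx0 h14
  have hbound : 2 * (p : ℝ) * |z.re| < (p : ℝ) ^ 2 + 1 := by
    have ha : |z.re| ≤ 3 * (p : ℝ) ^ ((5 : ℝ) / 14) := (Complex.abs_re_le_norm z).trans hz
    have hmul : (p : ℝ) ^ ((5 : ℝ) / 14) * (p : ℝ) ^ ((9 : ℝ) / 14) = (p : ℝ) := by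
      rw [← Real.rpow_add (by linarith)]
      norm_num
    have h5 : (0 : ℝ) ≤ (p : ℝ) ^ ((5 : ℝ) / 14) := Real.rpow_nonneg hpR0 _
    nlinarith [mul_le_mul_of_nonneg_left h6 h5]
  have h1 := congrArg Complex.re heq
  have h2 := congrArg Complex.im heq
  simp only [Complex.add_re, Complex.add_im, Complex.mul_re, Complex.mul_im,
    Complex.conj_re, Complex.conj_im, Complex.natCast_re, Complex.natCast_im,
    pow_two] at h1 h2
  have hre : z.re = z'.re := by nlinarith [sq_nonneg ((p : ℝ) - 1), sq_nonneg ((p : ℝ) + 1)]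
  have hpos : (p : ℝ) ^ 2 + 2 * (p : ℝ) * z.re + 1 > 0 := by
    have := neg_abs_le z.re
    nlinarith
  have him : z.im = z'.im := by
    have hfac : (z.im - z'.im) * ((p : ℝ) ^ 2 + 2 * (p : ℝ) * z.re + 1) = 0 := by
      rw [hre] at h2 ⊢
      ring_nf at h2 ⊢
      nlinarith [h2]
    rcases mul_eq_zero.mp hfac with h | h
    · linarith
    · linarith
  exact Complex.ext hre him
end
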